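/- Let S be a nonempty class of finite biquandles closed under cabling, and let T be the class of biquandles admitting a morphism (respectively epimorphism) of solutions to some member of S. Then T is closed under cabling. In particular, if a biquandle (X,r) is decomposable, then every k-cabling (X, r^{(k)}) is decomposable. -/

import Mathlib

open Function

section Defs

variable {X Y : Type*}

/-- `r₁₂ = r × id` on `X³`. -/
def r12 (r : X × X → X × X) : X × X × X → X × X × X :=
  fun p => ((r (p.1, p.2.1)).1, (r (p.1, p.2.1)).2, p.2.2)

/-- `r₂₃ = id × r` on `X³`. -/
def r23 (r : X × X → X × X) : X × X × X → X × X × X :=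
  fun p => (p.1, r p.2)

/-- The Yang--Baxter (braid) equation. -/
def IsYB (r : X × X → X × X) : Prop :=
  (r12 r) ∘ (r23 r) ∘ (r12 r) = (r23 r) ∘ (r12 r) ∘ (r23 r)

/-- The solution map `r(x,y) = (λ_x(y), ρ_y(x))` built from `λ` and `ρ`. -/
def rMap (lam : X → Equiv.Perm X) (rho : X → X → X) : X × X → X × X :=
  fun p => (lam p.1 p.2, rho p.2 p.1)

/-- `(X, r)` with `r(x,y) = (λ_x(y), ρ_y(x))` is a bijective non-degenerate
set-theoretic solution of the Yang--Baxter equation. -/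
def IsSolution (lam : X → Equiv.Perm X) (rho : X → X → X) : Prop :=
  IsYB (rMap lam rho) ∧ Bijective (rMap lam rho) ∧ ∀ y, Bijective (rho y)

/-- The (left) derived operation `σ_y(x) = x ◁ y = λ_y(ρ_{λ_x⁻¹(y)}(x))`. -/
def sigMap (lam : X → Equiv.Perm X) (rho : X → X → X) (y : X) : X → X :=
  fun x => lam y (rho ((lam x).symm y) x)

/-- A biquandle: a solution whose derived rack is a quandle. -/
def IsBiquandle (lam : X → Equiv.Perm X) (rho : X → X → X) : Prop :=
  IsSolution lam rho ∧ ∀ x, sigMap lam rho x x = x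

/-- The diagonal map `q(x) = λ_x⁻¹(x)`. -/
def qMap (lam : X → Equiv.Perm X) : X → X := fun x => (lam x).symm x

/-- `λ` of the `k`-th additive multiple: `λ_{kx}` restricted to `X`,
computed via `kx = x ∘ q(x) ∘ ⋯ ∘ q^{k-1}(x)` and `λ_{a∘b} = λ_a λ_b`. -/
def lamCab (lam : X → Equiv.Perm X) : ℕ → X → Equiv.Perm X
  | 0, _ => 1
  | k+1, x => lam x * lamCab lam k (qMap lam x)

/-- `σ` of the `k`-th additive multiple: `σ_{ky} = σ_y^k` restricted to `X`. -/
def sigCab (lam : X → Equiv.Perm X) (rho : X → X → X) (k : ℕ) (y : X) : X → X :=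
  (sigMap lam rho y)^[k]

/-- `ρ` of the `k`-cabled solution, via `ρ_b(a) = λ_{λ_a(b)}⁻¹ σ_{λ_a(b)}(a)`. -/
def rhoCab (lam : X → Equiv.Perm X) (rho : X → X → X) (k : ℕ) (y x : X) : X :=
  (lamCab lam k (lamCab lam k x y)).symm (sigCab lam rho k (lamCab lam k x y) x)

/-- The `k`-cabled solution `r^{(k)}`. -/
def rCab (lam : X → Equiv.Perm X) (rho : X → X → X) (k : ℕ) : X × X → X × X :=
  rMap (lamCab lam k) (rhoCab lam rho k)

/-- `f` is a morphism of solutions `(X,r) → (Y,s)`. -/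
def IsMor (r : X × X → X × X) (s : Y × Y → Y × Y) (f : X → Y) : Prop :=
  ∀ p, Prod.map f f (r p) = s (Prod.map f f p)

/-- `(X,r)` is `n`-decomposable: a partition into `n` nonempty subsolutions
`X_1, …, X_n` with `r(X_i × X_j) = X_j × X_i`. -/
def NDecomp (r : X × X → X × X) (n : ℕ) : Prop :=
  ∃ P : Fin n → Set X, (∀ i, (P i).Nonempty) ∧
    (∀ i j, i ≠ j → Disjoint (P i) (P j)) ∧ (⋃ i, P i) = Set.univ ∧
    ∀ i j, r '' ((P i) ×ˢ (P j)) = (P j) ×ˢ (P i)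

/-- `(X,r)` is decomposable: a partition `X = Y ⊔ Z` into nonempty parts with
`r(Y×Y) ⊆ Y×Y` and `r(Z×Z) ⊆ Z×Z`. -/
def Decomposable (r : X × X → X × X) : Prop :=
  ∃ A B : Set X, A.Nonempty ∧ B.Nonempty ∧ Disjoint A B ∧ A ∪ B = Set.univ ∧
    r '' (A ×ˢ A) ⊆ A ×ˢ A ∧ r '' (B ×ˢ B) ⊆ B ×ˢ B

/-- A solution is simple if every epimorphic image is isomorphic to it or a singleton. -/
def SimpleSol {X : Type u} (r : X × X → X × X) : Prop :=
  ∀ (Z : Type u) (s : Z × Z → Z × Z) (f : X → Z),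
    Surjective f → IsMor r s f → Bijective f ∨ Subsingleton Z

/-- The image in `Perm X` of the group `S(X,r) = ⟨σ_x⁻¹ : x ∈ X⟩ ⋊ 𝒢(X,r)`
acting on `X` via `(σ_a⁻¹, λ_b, ρ_b⁻¹) · x = σ_a⁻¹ λ_b (x)`:
the subgroup of `Perm X` generated by all `σ_x` and `λ_x`. -/
def permGroupOf (lam : X → Equiv.Perm X) (rho : X → X → X) : Subgroup (Equiv.Perm X) :=
  Subgroup.closure {g : Equiv.Perm X | (∃ y, ⇑g = sigMap lam rho y) ∨ ∃ y, g = lam y}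

/-- Relations `x ∘ y = l(x,y) ∘ ρ(y,x)` defining a structure group. -/
def relsOf (l ρ : X → X → X) : Set (FreeGroup X) :=
  {w | ∃ x y : X, w = FreeGroup.of x * FreeGroup.of y *
      (FreeGroup.of (l x y) * FreeGroup.of (ρ y x))⁻¹}

end Defs

section Aux

variable {X Y : Type*}

/-- A morphism of solutions is also a morphism of the `k`-cabled solutions. -/
theorem isMor_rCab {lam : X → Equiv.Perm X} {rho : X → X → X}
    {l : Y → Equiv.Perm Y} {ρ : Y → Y → Y} {f : X → Y}
    (h : IsMor (rMap lam rho) (rMap l ρ) f) (k : ℕ) :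
    IsMor (rCab lam rho k) (rCab l ρ k) f := by
  have hl : ∀ x y, f (lam x y) = l (f x) (f y) := fun x y =>
    congrArg Prod.fst (h (x, y))
  have hr : ∀ x y, f (rho y x) = ρ (f y) (f x) := fun x y =>
    congrArg Prod.snd (h (x, y))
  have hlinv : ∀ x y, f ((lam x).symm y) = (l (f x)).symm (f y) := by
    intro x y
    apply (l (f x)).injective
    rw [Equiv.apply_symm_apply, ← hl, Equiv.apply_symm_apply]
  have hq : ∀ x, f (qMap lam x) = qMap l (f x) := fun x => hlinv x x
  have hlc : ∀ k x y, f (lamCab lam k x y) = lamCab l k (f x) (f y) := by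
    intro k
    induction k with
    | zero => intro x y; simp [lamCab]
    | succ n ih =>
      intro x y
      simp only [lamCab, Equiv.Perm.mul_apply]
      rw [hl, ih, hq]
  have hlcinv : ∀ k x y, f ((lamCab lam k x).symm y) = (lamCab l k (f x)).symm (f y) := by
    intro k x y
    apply (lamCab l k (f x)).injective
    rw [Equiv.apply_symm_apply, ← hlc, Equiv.apply_symm_apply]
  have hsig : ∀ a x, f (sigMap lam rho a x) = sigMap l ρ (f a) (f x) := by
    intro a x
    simp only [sigMap]
    rw [hl, hr, hlinv]
  have hsigc : ∀ k a x, f (sigCab lam rho k a x) = sigCab l ρ k (f a) (f x) := by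
    intro k
    induction k with
    | zero => intro a x; simp [sigCab]
    | succ n ih =>
      intro a x
      simp only [sigCab, Function.iterate_succ_apply'] at *
      rw [hsig, ih]
  have hrho : ∀ y x, f (rhoCab lam rho k y x) = rhoCab l ρ k (f y) (f x) := by
    intro y x
    simp only [rhoCab]
    rw [hlcinv, hlc, hsigc, hlc]
  intro p
  obtain ⟨x, y⟩ := p
  show (f (lamCab lam k x y), f (rhoCab lam rho k y x)) = _
  rw [hlc, hrho]
  rfl

/-- On a finite type, the inverse of a permutation mapping `A` into itself
maps `A` into itself. -/
theorem perm_symm_mapsTo [Finite X] {A : Set X} (g : Equiv.Perm X)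
    (h : Set.MapsTo g A A) : Set.MapsTo g.symm A A := by
  have himg : g '' A = A := by
    exact Set.eq_of_subset_of_ncard_le (Set.mapsTo_iff_image_subset.mp h)
      (by rw [Set.ncard_image_of_injective _ g.injective]) (Set.toFinite A)
  intro y hy
  rw [← himg] at hy
  obtain ⟨z, hz, rfl⟩ := hy
  simpa using hz

/-- An invariant part for a solution is invariant for all cablings. -/
theorem rCab_image_subset [Finite X] {lam : X → Equiv.Perm X} {rho : X → X → X}
    {A : Set X} (hA : ∀ x ∈ A, ∀ y ∈ A, lam x y ∈ A ∧ rho y x ∈ A) (k : ℕ) :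
    rCab lam rho k '' (A ×ˢ A) ⊆ A ×ˢ A := by
  have hlamA : ∀ x ∈ A, Set.MapsTo (lam x) A A := fun x hx y hy => (hA x hx y hy).1
  have hq : ∀ x ∈ A, qMap lam x ∈ A := fun x hx => perm_symm_mapsTo _ (hlamA x hx) hx
  have hlc : ∀ k, ∀ x ∈ A, Set.MapsTo (lamCab lam k x) A A := by
    intro k
    induction k with
    | zero => intro x _ y hy; simpa [lamCab] using hy
    | succ n ih =>
      intro x hx y hy
      simp only [lamCab, Equiv.Perm.mul_apply]
      exact hlamA x hx (ih (qMap lam x) (hq x hx) hy)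
  have hsig : ∀ a ∈ A, ∀ x ∈ A, sigMap lam rho a x ∈ A := by
    intro a ha x hx
    have hz : (lam x).symm a ∈ A := perm_symm_mapsTo _ (hlamA x hx) ha
    exact (hA a ha _ ((hA x hx _ hz).2)).1
  have hsigc : ∀ k, ∀ a ∈ A, ∀ x ∈ A, sigCab lam rho k a x ∈ A := by
    intro k
    induction k with
    | zero => intro a _ x hx; simpa [sigCab] using hx
    | succ n ih =>
      intro a ha x hx
      simp only [sigCab, Function.iterate_succ_apply'] at *
      exact hsig a ha _ (ih a ha x hx)
  have hrho : ∀ y ∈ A, ∀ x ∈ A, rhoCab lam rho k y x ∈ A := by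
    intro y hy x hx
    have ha : lamCab lam k x y ∈ A := hlc k x hx hy
    exact perm_symm_mapsTo _ (hlc k _ ha) (hsigc k _ ha x hx)
  rintro p ⟨⟨x, y⟩, ⟨hx, hy⟩, rfl⟩
  exact ⟨hlc k x hx hy, hrho y hy x hx⟩

end Aux

/-- if `S` is a nonempty class of finite biquandles closed under cabling,
then the class `T` of biquandles with a homomorphism (resp. epimorphism) to a member
of `S` is closed under cabling; in particular decomposability of biquandles is
preserved under cabling. -/
theorem classes_closed_under_cabling
    (S : ∀ Z : Type, (Z → Equiv.Perm Z) → (Z → Z → Z) → Prop)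
    (hSne : ∃ Z l ρ, S Z l ρ)
    (hSbq : ∀ Z l ρ, S Z l ρ → Finite Z ∧ IsBiquandle l ρ)
    (hScab : ∀ Z l ρ (k : ℕ), 0 < k → S Z l ρ → S Z (lamCab l k) (rhoCab l ρ k)) :
    (∀ (X : Type) (lam : X → Equiv.Perm X) (rho : X → X → X),
      Finite X → IsBiquandle lam rho →
      (∃ (Z : Type) (l : Z → Equiv.Perm Z) (ρ : Z → Z → Z) (f : X → Z),
        S Z l ρ ∧ IsMor (rMap lam rho) (rMap l ρ) f) →
      ∀ k : ℕ, 0 < k →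
      ∃ (Z : Type) (l : Z → Equiv.Perm Z) (ρ : Z → Z → Z) (f : X → Z),
        S Z l ρ ∧ IsMor (rCab lam rho k) (rMap l ρ) f) ∧
    (∀ (X : Type) (lam : X → Equiv.Perm X) (rho : X → X → X),
      Finite X → IsBiquandle lam rho →
      (∃ (Z : Type) (l : Z → Equiv.Perm Z) (ρ : Z → Z → Z) (f : X → Z),
        S Z l ρ ∧ Function.Surjective f ∧ IsMor (rMap lam rho) (rMap l ρ) f) →
      ∀ k : ℕ, 0 < k →
      ∃ (Z : Type) (l : Z → Equiv.Perm Z) (ρ : Z → Z → Z) (f : X → Z),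
        S Z l ρ ∧ Function.Surjective f ∧ IsMor (rCab lam rho k) (rMap l ρ) f) ∧
    (∀ (X : Type) (lam : X → Equiv.Perm X) (rho : X → X → X),
      Finite X → IsBiquandle lam rho → Decomposable (rMap lam rho) →
      ∀ k : ℕ, 0 < k → Decomposable (rCab lam rho k)) := by
  refine ⟨?_, ?_, ?_⟩
  · rintro X lam rho _ _ ⟨Z, l, ρ, f, hS, hmor⟩ k hk
    exact ⟨Z, lamCab l k, rhoCab l ρ k, f, hScab Z l ρ k hk hS, isMor_rCab hmor k⟩
  · rintro X lam rho _ _ ⟨Z, l, ρ, f, hS, hsurj, hmor⟩ k hk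
    exact ⟨Z, lamCab l k, rhoCab l ρ k, f, hScab Z l ρ k hk hS, hsurj, isMor_rCab hmor k⟩
  · rintro X lam rho hfin _ ⟨A, B, hAne, hBne, hdisj, huniv, hAsub, hBsub⟩ k _
    have hA : ∀ x ∈ A, ∀ y ∈ A, lam x y ∈ A ∧ rho y x ∈ A := by
      intro x hx y hy
      have := hAsub ⟨(x, y), ⟨hx, hy⟩, rfl⟩
      exact ⟨this.1, this.2⟩
    have hB : ∀ x ∈ B, ∀ y ∈ B, lam x y ∈ B ∧ rho y x ∈ B := by
      intro x hx y hy
      have := hBsub ⟨(x, y), ⟨hx, hy⟩, rfl⟩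
      exact ⟨this.1, this.2⟩
    exact ⟨A, B, hAne, hBne, hdisj, huniv,
      rCab_image_subset hA k, rCab_image_subset hB k⟩
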